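/- Let −1 ≤ a < b < 1 with a + b < 0, let d ≥ 1, n > d, and let v_1, …, v_n be unit vectors in ℝ^d such that ⟨v_i, v_j⟩ ∈ {a, b} for all i ≠ j. Let S = (2G − (a+b)·J + (a+b−2)·I)/(b − a), where G is the Gram matrix of the v_i and J is the all-ones matrix. Set c = (a + b − 2)/(b − a). Then (X − c)^{n−d−1} divides the characteristic polynomial of S, and every eigenvalue μ of S (i.e., every real μ admitting a nonzero vector v with S v = μ v) satisfies μ ≥ c. -/

import Mathlib

open Polynomial
open Matrix

section AuxCharpoly

lemma my_charpoly_conj {n : Type*} [Fintype n] [DecidableEq n]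
    (U A : Matrix n n ℝ) (hU : U * star U = 1) :
    (U * A * star U).charpoly = A.charpoly := by
  have hdet : (U.map C).det * ((star U).map C).det = 1 := by
    rw [← det_mul, ← Matrix.map_mul, hU]
    simp
  have key : charmatrix (U * A * star U) = U.map C * charmatrix A * (star U).map C := by
    rw [charmatrix, charmatrix, Matrix.mul_sub, Matrix.sub_mul]
    congr 1
    · have h1 : Commute (Matrix.scalar n (X : ℝ[X])) (U.map C) :=
        scalar_commute _ (fun r => Commute.all _ _) _
      calc Matrix.scalar n (X : ℝ[X])
          = Matrix.scalar n (X : ℝ[X]) * (U.map C * (star U).map C) := by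
            rw [← Matrix.map_mul, hU]; simp
        _ = U.map C * Matrix.scalar n (X : ℝ[X]) * (star U).map C := by
            rw [← Matrix.mul_assoc, h1.eq]
    · show (C : ℝ →+* ℝ[X]).mapMatrix (U * A * star U) = _
      simp [RingHom.mapMatrix_apply, Matrix.map_mul, Matrix.mul_assoc]
  rw [Matrix.charpoly, Matrix.charpoly, key, det_mul, det_mul]
  ring_nf
  rw [mul_comm, ← mul_assoc, mul_comm ((star U).map C).det, hdet, one_mul]

lemma my_charpoly_diagonal {n : Type*} [Fintype n] [DecidableEq n] (w : n → ℝ) :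
    (Matrix.diagonal w).charpoly = ∏ i, (X - C (w i)) := by
  have : charmatrix (Matrix.diagonal w) = Matrix.diagonal fun i => (X : ℝ[X]) - C (w i) := by
    ext i j
    by_cases h : i = j
    · subst h; simp
    · simp [h, Matrix.diagonal_apply_ne _ h]
  rw [Matrix.charpoly, this, det_diagonal]

end AuxCharpoly


/-- for a spherical two-distance set with `a + b < 0`, the Seidel
matrix `S` has eigenvalue `c = (a+b−2)/(b−a)` with multiplicity at least `n−d−1`,
and `c` is its smallest eigenvalue. -/
theorem stmt9 (d n : ℕ) (hd : 1 ≤ d) (hn : d < n)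
    (a b : ℝ) (ha : -1 ≤ a) (hab : a < b) (hb : b < 1) (hsum : a + b < 0)
    (v : Fin n → EuclideanSpace ℝ (Fin d))
    (hunit : ∀ i, ‖v i‖ = 1)
    (hinner : ∀ i j, i ≠ j →
      (inner ℝ (v i) (v j) : ℝ) = a ∨ (inner ℝ (v i) (v j) : ℝ) = b)
    (G J S : Matrix (Fin n) (Fin n) ℝ)
    (hG : ∀ i j, G i j = (inner ℝ (v i) (v j) : ℝ))
    (hJ : ∀ i j, J i j = 1)
    (hS : S = (b - a)⁻¹ •
      ((2 : ℝ) • G - (a + b) • J + (a + b - 2) • (1 : Matrix (Fin n) (Fin n) ℝ)))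
    (c : ℝ) (hc : c = (a + b - 2) / (b - a)) :
    (X - C c) ^ (n - d - 1) ∣ S.charpoly ∧
      ∀ (μ : ℝ) (w : Fin n → ℝ), w ≠ 0 → S.mulVec w = μ • w → c ≤ μ := by
  have hba : (0:ℝ) < b - a := sub_pos.2 hab
  set M : Matrix (Fin n) (Fin n) ℝ := (b - a)⁻¹ • ((2:ℝ) • G - (a+b) • J) with hM
  have hMS : M = S - c • 1 := by
    rw [hS, hc]
    ext i j
    simp only [Matrix.smul_apply, Matrix.sub_apply, Matrix.add_apply, Matrix.one_apply, hM,
      smul_eq_mul, div_eq_mul_inv]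
    split_ifs <;> ring
  -- the factor matrix
  set CM : Matrix (Fin (d+1)) (Fin n) ℝ :=
    Matrix.of (fun k i => if h : (k:ℕ) < d then Real.sqrt 2 * v i ⟨(k:ℕ), h⟩
      else Real.sqrt (-(a+b))) with hCM
  have hCC : CMᵀ * CM = (2:ℝ) • G - (a+b) • J := by
    ext i j
    rw [Matrix.mul_apply]
    have : ∀ k : Fin (d+1), CMᵀ i k * CM k j =
        (if h : (k:ℕ) < d then 2 * v i ⟨(k:ℕ), h⟩ * v j ⟨(k:ℕ), h⟩ else -(a+b)) := by
      intro k
      simp only [Matrix.transpose_apply, hCM, Matrix.of_apply]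
      split_ifs with h
      · have h2 : Real.sqrt 2 * Real.sqrt 2 = 2 := Real.mul_self_sqrt (by norm_num)
        calc Real.sqrt 2 * v i ⟨(k:ℕ), h⟩ * (Real.sqrt 2 * v j ⟨(k:ℕ), h⟩)
            = Real.sqrt 2 * Real.sqrt 2 * (v i ⟨(k:ℕ), h⟩ * v j ⟨(k:ℕ), h⟩) := by ring
          _ = 2 * v i ⟨(k:ℕ), h⟩ * v j ⟨(k:ℕ), h⟩ := by rw [h2]; ring
      · exact Real.mul_self_sqrt (by linarith)
    rw [Finset.sum_congr rfl (fun k _ => this k)]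
    rw [Fin.sum_univ_castSucc]
    simp only [Fin.coe_castSucc, Fin.is_lt, dif_pos, Fin.val_last, lt_irrefl, dif_neg, Fin.eta,
      Matrix.sub_apply, Matrix.smul_apply, smul_eq_mul, hG, hJ]
    have hip : (inner ℝ (v i) (v j) : ℝ) = ∑ k : Fin d, v i k * v j k := by
      simp [PiLp.inner_apply, RCLike.inner_apply, mul_comm]
    rw [hip, Finset.mul_sum]
    have hsum2 : ∑ k : Fin d, 2 * v i k * v j k = ∑ k : Fin d, 2 * (v i k * v j k) :=
      Finset.sum_congr rfl fun k _ => by ring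
    rw [hsum2]
    norm_num
    ring
  have hMfact : M = ((b - a)⁻¹ • CMᵀ) * CM := by
    rw [hM, ← hCC, Matrix.smul_mul]
  have hrank : M.rank ≤ d + 1 := by
    calc M.rank ≤ CM.rank := by rw [hMfact]; exact Matrix.rank_mul_le_right _ _
      _ ≤ Fintype.card (Fin (d+1)) := Matrix.rank_le_card_height CM
      _ = d + 1 := by simp
  have hPSD : ∀ w : Fin n → ℝ, 0 ≤ w ⬝ᵥ M.mulVec w := by
    intro w
    rw [hMfact, ← Matrix.mulVec_mulVec, Matrix.smul_mulVec, dotProduct_smul,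
      Matrix.dotProduct_mulVec, Matrix.vecMul_transpose, smul_eq_mul]
    exact mul_nonneg (by positivity) (Finset.sum_nonneg fun k _ => mul_self_nonneg _)
  have part2 : ∀ (μ : ℝ) (w : Fin n → ℝ), w ≠ 0 → S.mulVec w = μ • w → c ≤ μ := by
    intro μ w hw hSw
    have hMw : M.mulVec w = (μ - c) • w := by
      rw [hMS, Matrix.sub_mulVec, hSw, Matrix.smul_mulVec, Matrix.one_mulVec, sub_smul]
    have h1 : 0 ≤ (μ - c) * (w ⬝ᵥ w) := by
      have := hPSD w
      rwa [hMw, dotProduct_smul, smul_eq_mul] at this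
    have h2 : 0 < w ⬝ᵥ w := by
      rcases lt_or_eq_of_le (Finset.sum_nonneg fun i _ => mul_self_nonneg (w i)) with h | h
      · exact h
      · exact absurd (dotProduct_self_eq_zero.1 h.symm) hw
    nlinarith
  have hGsymm : ∀ i j : Fin n, G i j = G j i := fun i j => by rw [hG, hG, real_inner_comm]
  have hH : S.IsHermitian := by
    unfold Matrix.IsHermitian
    ext i j
    rw [Matrix.conjTranspose_apply, star_trivial, hS]
    simp only [Matrix.smul_apply, Matrix.add_apply, Matrix.sub_apply,
      Matrix.one_apply, hJ, smul_eq_mul, hGsymm j i]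
    by_cases hij : i = j
    · subst hij; rfl
    · rw [if_neg hij, if_neg (Ne.symm hij)]
  set ev : Fin n → ℝ := hH.eigenvalues with hev
  have hMeig : ∀ i, M *ᵥ ⇑(hH.eigenvectorBasis i) = (ev i - c) • ⇑(hH.eigenvectorBasis i) := by
    intro i
    rw [hMS, Matrix.sub_mulVec, hH.mulVec_eigenvectorBasis i, Matrix.smul_mulVec,
      Matrix.one_mulVec, sub_smul]
  classical
  set s : Finset (Fin n) := Finset.univ.filter (fun i => ev i ≠ c) with hsdef
  have hsle : s.card ≤ M.rank := by
    have hli : LinearIndependent ℝ (fun i : {x // x ∈ s} => ⇑(hH.eigenvectorBasis i.1)) := by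
      have h0 : LinearIndependent ℝ (fun i : Fin n => ⇑(hH.eigenvectorBasis i)) := by
        have := hH.eigenvectorBasis.toBasis.linearIndependent
        rw [OrthonormalBasis.coe_toBasis] at this
        exact this.map' (WithLp.linearEquiv 2 ℝ (Fin n → ℝ)).toLinearMap (LinearEquiv.ker _)
      exact h0.comp _ Subtype.val_injective
    have hmem : ∀ i : {x // x ∈ s}, ⇑(hH.eigenvectorBasis i.1) ∈ LinearMap.range M.mulVecLin := by
      intro i
      have hne : ev i.1 - c ≠ 0 := sub_ne_zero.2 (Finset.mem_filter.1 i.2).2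
      refine ⟨(ev i.1 - c)⁻¹ • ⇑(hH.eigenvectorBasis i.1), ?_⟩
      rw [Matrix.mulVecLin_apply, Matrix.mulVec_smul, hMeig, smul_smul, inv_mul_cancel₀ hne,
        one_smul]
    calc s.card = Fintype.card {x // x ∈ s} := (Fintype.card_coe s).symm
      _ = Module.finrank ℝ (Submodule.span ℝ (Set.range
            (fun i : {x // x ∈ s} => ⇑(hH.eigenvectorBasis i.1)))) :=
          (finrank_span_eq_card hli).symm
      _ ≤ Module.finrank ℝ (LinearMap.range M.mulVecLin) :=
          Submodule.finrank_mono (Submodule.span_le.2 (Set.range_subset_iff.2 hmem))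
      _ = M.rank := rfl
  have hchar : S.charpoly = ∏ i, (X - C (ev i)) := by
    have hUU : (hH.eigenvectorUnitary : Matrix (Fin n) (Fin n) ℝ) *
        star (hH.eigenvectorUnitary : Matrix (Fin n) (Fin n) ℝ) = 1 :=
      (Matrix.mem_unitaryGroup_iff).mp (hH.eigenvectorUnitary).2
    conv_lhs => rw [hH.spectral_theorem, Unitary.conjStarAlgAut_apply]
    rw [my_charpoly_conj _ _ hUU, my_charpoly_diagonal]
    apply Finset.prod_congr rfl
    intro i _
    simp [hev]
  have hcardc : (n - d - 1) ≤ (Finset.univ.filter fun i => ev i = c).card := by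
    have hpm := Finset.card_filter_add_card_filter_not
      (s := (Finset.univ : Finset (Fin n))) (p := fun i => ev i = c)
    have hcardn : (Finset.univ : Finset (Fin n)).card = n := by simp
    have hs2 : (Finset.univ.filter fun i => ¬ ev i = c).card ≤ d + 1 := le_trans hsle hrank
    omega
  have hdvd : (X - C c) ^ (n - d - 1) ∣ S.charpoly := by
    rw [hchar]
    have h1 : ∏ i ∈ Finset.univ.filter (fun i => ev i = c), (X - C (ev i)) ∣
        ∏ i, (X - C (ev i)) :=
      Finset.prod_dvd_prod_of_subset _ _ _ (Finset.filter_subset _ _)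
    have h2 : ∏ i ∈ Finset.univ.filter (fun i => ev i = c), (X - C (ev i)) =
        (X - C c) ^ (Finset.univ.filter (fun i => ev i = c)).card := by
      rw [Finset.prod_congr rfl (fun i hi => by rw [(Finset.mem_filter.1 hi).2]),
        Finset.prod_const]
    exact dvd_trans (pow_dvd_pow _ hcardc) (h2 ▸ h1)
  exact ⟨hdvd, part2⟩
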